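/- If G is a finite group with fewer than four subgroups not attaining the maximum Chermak–Delgado measure (δ_CD(G) < 4), then G is nilpotent. -/

import Mathlib

/-- The Chermak–Delgado measure of a subgroup. -/
noncomputable def cdMeasure {G : Type*} [Group G] (H : Subgroup G) : ℕ :=
  Nat.card H * Nat.card (Subgroup.centralizer (H : Set G))

namespace CDNilpotentAux

open Subgroup MulAction
open scoped Pointwise

variable {G : Type*} [Group G] [Finite G]

set_option linter.unusedSectionVars false

lemma card_set_mul_card_inf (H K : Subgroup G) :
    Nat.card (↑H * ↑K : Set G) * Nat.card ↥(H ⊓ K) = Nat.card ↥H * Nat.card ↥K := by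
  classical
  rw [Subgroup.card_mul_eq_card_subgroup_mul_card_quotient K (↑H)]
  have horb : ((↑H : Set G).image ((↑) : G → G ⧸ K)) = MulAction.orbit H ((1:G) : G ⧸ K) := by
    ext x
    simp only [Set.mem_image, MulAction.mem_orbit_iff, Subgroup.smul_def,
      SetLike.mem_coe]
    constructor
    · rintro ⟨g, hg, rfl⟩
      exact ⟨⟨g, hg⟩, by change ((g:G) • ((1:G) : G ⧸ K)) = _; rw [MulAction.Quotient.smul_mk]; simp⟩
    · rintro ⟨⟨g, hg⟩, rfl⟩
      exact ⟨g, hg, by change _ = ((g:G) • ((1:G) : G ⧸ K)); rw [MulAction.Quotient.smul_mk]; simp⟩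
  have hstab : MulAction.stabilizer (↥H) ((1:G) : G ⧸ K) = K.subgroupOf H := by
    ext h
    simp only [MulAction.mem_stabilizer_iff, Subgroup.smul_def, MulAction.Quotient.smul_mk,
      mul_one, Subgroup.mem_subgroupOf]
    change ((h:G) • ((1:G) : G ⧸ K)) = _ ↔ _
    rw [MulAction.Quotient.smul_mk, smul_eq_mul, mul_one]
    rw [show ((1:G) : G ⧸ K) = QuotientGroup.mk 1 from rfl, QuotientGroup.eq]
    simp
  have h1 : (K.subgroupOf H).index = Nat.card ((↑H : Set G).image ((↑) : G → G ⧸ K)) := by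
    rw [horb, ← hstab, MulAction.index_stabilizer, Nat.card_coe_set_eq]
  have h3 : Nat.card ↥(K.subgroupOf H) = Nat.card ↥(H ⊓ K) := by
    rw [show K.subgroupOf H = (H ⊓ K).subgroupOf H by rw [inf_comm, inf_subgroupOf_right]]
    exact (Nat.card_congr (Subgroup.subgroupOfEquivOfLe inf_le_left).toEquiv)
  rw [← h1, h3.symm, mul_assoc, Subgroup.index_mul_card, mul_comm]

lemma cd_pos (H : Subgroup G) : 0 < cdMeasure H :=
  Nat.mul_pos Nat.card_pos Nat.card_pos

/-- Two subgroups of maximal Chermak–Delgado measure satisfy `|H ⊔ K| |H ⊓ K| = |H| |K|`. -/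
lemma card_sup_mul_card_inf_of_max {H K : Subgroup G}
    (hH : ∀ L : Subgroup G, cdMeasure L ≤ cdMeasure H)
    (hK : ∀ L : Subgroup G, cdMeasure L ≤ cdMeasure K) :
    Nat.card ↥(H ⊔ K) * Nat.card ↥(H ⊓ K) = Nat.card ↥H * Nat.card ↥K := by
  have hMK : cdMeasure K = cdMeasure H := le_antisymm (hH K) (hK H)
  set CH := Subgroup.centralizer (H : Set G)
  set CK := Subgroup.centralizer (K : Set G)
  have hsub : (↑CH * ↑CK : Set G) ⊆ ↑(Subgroup.centralizer ((H ⊓ K : Subgroup G) : Set G)) := by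
    rw [Set.mul_subset_iff]
    intro a ha b hb
    exact Subgroup.mul_mem _
      (Subgroup.centralizer_le (by exact_mod_cast SetLike.coe_mono inf_le_left) ha)
      (Subgroup.centralizer_le (by exact_mod_cast SetLike.coe_mono inf_le_right) hb)
  have hinfle : CH ⊓ CK ≤ Subgroup.centralizer ((H ⊔ K : Subgroup G) : Set G) := by
    rw [Subgroup.le_centralizer_iff]
    refine sup_le ?_ ?_ <;> rw [← Subgroup.le_centralizer_iff]
    · exact inf_le_left
    · exact inf_le_right
  have hc1 : Nat.card (↑CH * ↑CK : Set G) ≤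
      Nat.card (Subgroup.centralizer ((H ⊓ K : Subgroup G) : Set G)) := by
    have := Nat.card_mono (Set.toFinite _) hsub
    simpa using this
  have hc2 : Nat.card ↥(CH ⊓ CK) ≤
      Nat.card (Subgroup.centralizer ((H ⊔ K : Subgroup G) : Set G)) :=
    Subgroup.card_le_of_le hinfle
  have hcc : Nat.card CH * Nat.card CK ≤
      Nat.card (Subgroup.centralizer ((H ⊓ K : Subgroup G) : Set G)) *
      Nat.card (Subgroup.centralizer ((H ⊔ K : Subgroup G) : Set G)) := by
    calc Nat.card CH * Nat.card CK
        = Nat.card (↑CH * ↑CK : Set G) * Nat.card ↥(CH ⊓ CK) := (card_set_mul_card_inf CH CK).symm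
      _ ≤ _ := Nat.mul_le_mul hc1 hc2
  have hchain : cdMeasure K * cdMeasure H ≤ (Nat.card (↑H * ↑K : Set G) *
      Nat.card (Subgroup.centralizer ((H ⊔ K : Subgroup G) : Set G))) * cdMeasure H := by
    calc cdMeasure K * cdMeasure H
        = (Nat.card H * Nat.card K) * (Nat.card CH * Nat.card CK) := by
          unfold cdMeasure; ring
      _ = (Nat.card (↑H * ↑K : Set G) * Nat.card ↥(H ⊓ K)) * (Nat.card CH * Nat.card CK) := by
          rw [card_set_mul_card_inf]
      _ ≤ (Nat.card (↑H * ↑K : Set G) * Nat.card ↥(H ⊓ K)) *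
          (Nat.card (Subgroup.centralizer ((H ⊓ K : Subgroup G) : Set G)) *
           Nat.card (Subgroup.centralizer ((H ⊔ K : Subgroup G) : Set G))) :=
          Nat.mul_le_mul_left _ hcc
      _ = (Nat.card (↑H * ↑K : Set G) *
           Nat.card (Subgroup.centralizer ((H ⊔ K : Subgroup G) : Set G))) *
          cdMeasure (H ⊓ K) := by unfold cdMeasure; ring
      _ ≤ _ := Nat.mul_le_mul_left _ (hH _)
  have hstep : cdMeasure H ≤ Nat.card (↑H * ↑K : Set G) *
      Nat.card (Subgroup.centralizer ((H ⊔ K : Subgroup G) : Set G)) :=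
    hMK ▸ Nat.le_of_mul_le_mul_right hchain (cd_pos H)
  have hsup_le : Nat.card ↥(H ⊔ K) ≤ Nat.card (↑H * ↑K : Set G) := by
    have h4 : cdMeasure (H ⊔ K) ≤ Nat.card (↑H * ↑K : Set G) *
        Nat.card (Subgroup.centralizer ((H ⊔ K : Subgroup G) : Set G)) := le_trans (hH _) hstep
    unfold cdMeasure at h4
    exact Nat.le_of_mul_le_mul_right h4 Nat.card_pos
  have hle_sup : Nat.card (↑H * ↑K : Set G) ≤ Nat.card ↥(H ⊔ K) := by
    have hss : (↑H * ↑K : Set G) ⊆ ↑(H ⊔ K) := by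
      rw [Set.mul_subset_iff]
      intro a ha b hb
      exact Subgroup.mul_mem _ (le_sup_left (a := H) (b := K) ha)
        (le_sup_right (a := H) (b := K) hb)
    have := Nat.card_mono (Set.toFinite _) hss
    simpa using this
  rw [← le_antisymm hle_sup hsup_le]
  exact card_set_mul_card_inf H K

lemma centralizer_map_equiv (φ : G ≃* G) (H : Subgroup G) :
    Subgroup.centralizer ((H.map φ.toMonoidHom : Subgroup G) : Set G)
      = (Subgroup.centralizer (H : Set G)).map φ.toMonoidHom := by
  ext x
  simp only [Subgroup.mem_centralizer_iff, Subgroup.mem_map, SetLike.mem_coe,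
    MulEquiv.coe_toMonoidHom]
  constructor
  · intro hx
    refine ⟨φ.symm x, fun h hh => ?_, by simp⟩
    have h1 : φ h * x = x * φ h := hx (φ h) ⟨h, hh, rfl⟩
    apply φ.injective
    simp only [map_mul, MulEquiv.apply_symm_apply]
    exact h1
  · rintro ⟨y, hy, rfl⟩ z hz
    obtain ⟨h, hh, rfl⟩ := hz
    rw [← map_mul, ← map_mul, hy h hh]

lemma cdMeasure_map_equiv (φ : G ≃* G) (H : Subgroup G) :
    cdMeasure (H.map φ.toMonoidHom) = cdMeasure H := by
  unfold cdMeasure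
  rw [centralizer_map_equiv]
  rw [← Nat.card_congr (Subgroup.equivMapOfInjective H φ.toMonoidHom φ.injective).toEquiv,
    ← Nat.card_congr (Subgroup.equivMapOfInjective _ φ.toMonoidHom φ.injective).toEquiv]

/-- A Sylow subgroup of maximal Chermak–Delgado measure is normal. -/
lemma sylow_normal_of_max {p : ℕ} [Fact p.Prime] (Q : Sylow p G)
    (hQ : ∀ L : Subgroup G, cdMeasure L ≤ cdMeasure (Q : Subgroup G)) :
    (Q : Subgroup G).Normal := by
  constructor
  intro n hn g
  set φ : G ≃* G := MulAut.conj g with hφ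
  set Q' : Subgroup G := (Q : Subgroup G).map φ.toMonoidHom with hQ'def
  have hcd : cdMeasure Q' = cdMeasure (Q : Subgroup G) := cdMeasure_map_equiv φ _
  have hQ'max : ∀ L : Subgroup G, cdMeasure L ≤ cdMeasure Q' := fun L => hcd ▸ hQ L
  have hkey := card_sup_mul_card_inf_of_max hQ hQ'max
  obtain ⟨a, ha⟩ := IsPGroup.iff_card.mp Q.isPGroup'
  have hQ'card : Nat.card Q' = p ^ a := by
    rw [← Nat.card_congr (Subgroup.equivMapOfInjective _ φ.toMonoidHom φ.injective).toEquiv, ha]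
  have hdvd : Nat.card ↥((Q : Subgroup G) ⊔ Q') ∣ p ^ (a + a) := by
    have h5 : Nat.card ↥((Q : Subgroup G) ⊔ Q') ∣ Nat.card ↥(Q : Subgroup G) * Nat.card ↥Q' :=
      ⟨_, hkey.symm⟩
    rwa [ha, hQ'card, ← pow_add] at h5
  obtain ⟨b, -, hb⟩ := (Nat.dvd_prime_pow Fact.out).mp hdvd
  have hpg : IsPGroup p ↥((Q : Subgroup G) ⊔ Q') := IsPGroup.of_card hb
  have heq : (Q : Subgroup G) ⊔ Q' = (Q : Subgroup G) := Q.3 hpg le_sup_left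
  have hle : Q' ≤ (Q : Subgroup G) := le_trans le_sup_right heq.le
  have hmem : φ n ∈ Q' := Subgroup.mem_map.mpr ⟨n, hn, rfl⟩
  have := hle hmem
  simpa [hφ] using this

lemma normal_of_index_two (H : Subgroup G) (h : H.index = 2) : H.Normal := by
  constructor
  intro n hn g
  rw [Subgroup.mul_mem_iff_of_index_two h, Subgroup.mul_mem_iff_of_index_two h, inv_mem_iff]
  simp [hn]

lemma centralizer_normal_of_normal (N : Subgroup G) (hN : N.Normal) :
    (Subgroup.centralizer (N : Set G)).Normal := by
  constructor
  intro x hx g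
  rw [Subgroup.mem_centralizer_iff] at hx ⊢
  intro h hh
  have hh' : g⁻¹ * h * g ∈ N := by
    have := hN.conj_mem h hh g⁻¹
    simpa [mul_assoc] using this
  have h1 := hx _ hh'
  have h3 := congrArg (fun z => g * z * g⁻¹) h1
  simpa [mul_assoc] using h3

lemma mem_zpowers_order_two {t : G} (ht : orderOf t = 2) {x : G}
    (hx : x ∈ Subgroup.zpowers t) : x = 1 ∨ x = t := by
  obtain ⟨n, rfl⟩ := hx
  have ht2 : t ^ (2 : ℤ) = 1 := by
    have h0 := pow_orderOf_eq_one t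
    rw [ht] at h0
    rw [show (2:ℤ) = ((2:ℕ):ℤ) by norm_num, zpow_natCast]
    exact h0
  rcases Int.even_or_odd n with ⟨m, rfl⟩ | ⟨m, rfl⟩
  · left
    show t ^ (m + m) = 1
    rw [show m + m = 2 * m by ring, zpow_mul, ht2, one_zpow]
  · right
    show t ^ (2 * m + 1) = t
    rw [zpow_add, zpow_mul, ht2, one_zpow, one_mul, zpow_one]

lemma exists_orderTwo_of_two_dvd (H : Subgroup G) (h2 : 2 ∣ Nat.card H) :
    ∃ t : G, orderOf t = 2 ∧ t ∈ H := by
  haveI : Fact (Nat.Prime 2) := ⟨Nat.prime_two⟩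
  obtain ⟨x, hx⟩ := exists_prime_orderOf_dvd_card' (G := ↥H) 2 h2
  exact ⟨↑x, by rw [← hx]; exact orderOf_injective H.subtype H.subtype_injective x, x.2⟩

lemma mem_centralizer_zpowers_self (t : G) :
    t ∈ Subgroup.centralizer ((Subgroup.zpowers t : Subgroup G) : Set G) := by
  rw [Subgroup.mem_centralizer_iff]
  rintro h ⟨n, rfl⟩
  exact (Commute.refl t).zpow_left n |>.eq

lemma mem_centralizer_centralizer_self (H : Subgroup G) {t : G} (ht : t ∈ H) :
    t ∈ Subgroup.centralizer ((Subgroup.centralizer (H : Set G) : Subgroup G) : Set G) := by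
  rw [Subgroup.mem_centralizer_iff]
  intro h hh
  exact ((Subgroup.mem_centralizer_iff.mp hh) t ht).symm

end CDNilpotentAux
open CDNilpotentAux Subgroup in
theorem nilpotent_of_delta_cd_lt_four
    (G : Type*) [Group G] [Finite G]
    (h : Nat.card {H : Subgroup G //
      ¬ ∀ K : Subgroup G, cdMeasure K ≤ cdMeasure H} < 4) :
    Group.IsNilpotent G := by
  classical
  by_contra hnil
  have htfae := (isNilpotent_of_finite_tfae (G := G)).out 0 3
  rw [htfae] at hnil
  push_neg at hnil
  obtain ⟨p, hp, P, hPn⟩ := hnil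
  haveI : Fact p.Prime := hp
  haveI : Finite (Subgroup G) := Finite.of_injective _ SetLike.coe_injective
  have hnn : ∀ Q : Sylow p G, ¬ (Q : Subgroup G).Normal := by
    intro Q hn
    haveI := Sylow.unique_of_normal Q hn
    exact hPn (by rwa [show P = Q from Subsingleton.elim P Q])
  have hsyl : ∀ Q : Sylow p G, ¬ ∀ K : Subgroup G, cdMeasure K ≤ cdMeasure (Q : Subgroup G) :=
    fun Q hQ => hnn Q (sylow_normal_of_max Q hQ)
  let ι : Sylow p G → {H : Subgroup G // ¬ ∀ K : Subgroup G, cdMeasure K ≤ cdMeasure H} :=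
    fun Q => ⟨(Q : Subgroup G), hsyl Q⟩
  have hι : Function.Injective ι := fun Q R hQR => Sylow.ext (congrArg Subtype.val hQR)
  have hcard3 : Nat.card (Sylow p G) ≤ 3 := by
    have := Nat.card_le_card_of_injective ι hι
    omega
  have hne1 : Nat.card (Sylow p G) ≠ 1 := by
    intro h1
    haveI := (Nat.card_eq_one_iff_unique.mp h1).1
    apply hnn P
    rw [← Subgroup.normalizer_eq_top_iff, eq_top_iff]
    intro g _
    exact Sylow.smul_eq_iff_mem_normalizer.mp (Subsingleton.elim _ _)
  have hpos : 0 < Nat.card (Sylow p G) := Nat.card_pos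
  have hmod : Nat.card (Sylow p G) % p = 1 % p := card_sylow_modEq_one p G
  have hplt : p < Nat.card (Sylow p G) := by
    rcases lt_trichotomy (Nat.card (Sylow p G)) p with hlt | heq | hgt
    · rw [Nat.mod_eq_of_lt hlt, Nat.mod_eq_of_lt hp.out.one_lt] at hmod
      omega
    · rw [heq, Nat.mod_self, Nat.mod_eq_of_lt hp.out.one_lt] at hmod
      omega
    · exact hgt
  have hp2 : p = 2 := by have := hp.out.two_le; omega
  subst hp2
  -- extra element principle
  have hextra : ∀ X : Subgroup G, (∀ Q : Sylow 2 G, X ≠ (Q : Subgroup G)) →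
      ∀ K : Subgroup G, cdMeasure K ≤ cdMeasure X := by
    intro X hne
    by_contra hX
    let f : Option (Sylow 2 G) →
        {H : Subgroup G // ¬ ∀ K : Subgroup G, cdMeasure K ≤ cdMeasure H} :=
      fun o => Option.elim o ⟨X, hX⟩ ι
    have hf : Function.Injective f := by
      rintro (_ | Q) (_ | R) hQR
      · rfl
      · exact absurd (congrArg Subtype.val hQR) (hne R)
      · exact absurd (congrArg Subtype.val hQR).symm (hne Q)
      · exact congrArg some (hι hQR)
    have hO := Nat.card_le_card_of_injective f hf
    have hOc : Nat.card (Option (Sylow 2 G)) = Nat.card (Sylow 2 G) + 1 := by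
      haveI := Fintype.ofFinite (Sylow 2 G)
      simp [Nat.card_eq_fintype_card]
    omega
  set k := (Nat.card G).factorization 2 with hk
  have hcardP : ∀ Q : Sylow 2 G, Nat.card (Q : Subgroup G) = 2 ^ k :=
    fun Q => Sylow.card_eq_multiplicity Q
  have hk1 : 1 ≤ k := by
    by_contra hk0
    have hP1 : Nat.card (P : Subgroup G) = 1 := by
      rw [hcardP P, show k = 0 by omega, pow_zero]
    exact hnn P (by rw [Subgroup.eq_bot_of_card_eq _ hP1]; infer_instance)
  have hbotCD : ∀ K : Subgroup G, cdMeasure K ≤ cdMeasure (⊥ : Subgroup G) := by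
    apply hextra
    intro Q hQ
    apply hnn Q
    rw [← hQ]
    infer_instance
  have hcentbot : Subgroup.centralizer (((⊥ : Subgroup G) : Set G)) = ⊤ := by
    ext x; simp [Subgroup.mem_centralizer_iff]
  have hMbot : cdMeasure (⊥ : Subgroup G) = Nat.card G := by
    unfold cdMeasure
    rw [hcentbot, Subgroup.card_bot, Subgroup.card_top, one_mul]
  have hZ : Subgroup.center G = ⊥ := by
    have h1 : cdMeasure (Subgroup.center G) ≤ Nat.card G := hMbot ▸ hbotCD _
    have h2 : Subgroup.centralizer ((Subgroup.center G : Subgroup G) : Set G) = ⊤ := by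
      ext x
      simp only [Subgroup.mem_centralizer_iff, Subgroup.mem_top, iff_true]
      intro g hg
      exact (Subgroup.mem_center_iff.mp hg x).symm
    unfold cdMeasure at h1
    rw [h2, Subgroup.card_top] at h1
    have h3 : Nat.card (Subgroup.center G) ≤ 1 := by
      have hGpos : 0 < Nat.card G := Nat.card_pos
      have := Nat.le_of_mul_le_mul_right (by simpa [one_mul] using h1) hGpos
      exact this
    exact Subgroup.eq_bot_of_card_le _ h3
  have hcdeq : ∀ X : Subgroup G, (∀ K : Subgroup G, cdMeasure K ≤ cdMeasure X) →
      Nat.card X * Nat.card (Subgroup.centralizer (X : Set G)) = Nat.card G := by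
    intro X hX
    have h1 : cdMeasure X = Nat.card G := by
      rw [← hMbot]
      exact le_antisymm (hbotCD X) (hX ⊥)
    unfold cdMeasure at h1
    exact h1
  by_cases hk2 : 2 ≤ k
  · -- |P| ≥ 4 : use an involution t; ⟨t⟩ is in CD, gets index-2 centralizer, t central.
    have h2dvd : 2 ∣ Nat.card (P : Subgroup G) := by
      rw [hcardP P]
      exact dvd_pow_self 2 (by omega)
    obtain ⟨t, ht2, htP⟩ := exists_orderTwo_of_two_dvd (P : Subgroup G) h2dvd
    set T := Subgroup.zpowers t with hT
    have hcardT : Nat.card T = 2 := by rw [hT, Nat.card_zpowers, ht2]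
    have hTCD : ∀ K : Subgroup G, cdMeasure K ≤ cdMeasure T := by
      apply hextra
      intro Q hQ
      have he : Nat.card ↥T = Nat.card ↥(Q : Subgroup G) := by rw [hQ]
      rw [hcardT, hcardP Q] at he
      have h4 : (2:ℕ) ^ 2 ≤ 2 ^ k := Nat.pow_le_pow_right (by omega) hk2
      omega
    have hTeq := hcdeq T hTCD
    rw [hcardT] at hTeq
    set C := Subgroup.centralizer (T : Set G) with hC
    have hCCD : ∀ K : Subgroup G, cdMeasure K ≤ cdMeasure C := by
      apply hextra
      intro Q hQ
      have hcg : Nat.card G = 2 * 2 ^ k := by rw [← hTeq, hQ, hcardP Q]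
      have hfact : (Nat.card G).factorization 2 = k + 1 := by
        rw [hcg, ← pow_succ']
        simp [Nat.Prime.factorization_pow, Nat.Prime.factorization Nat.prime_two]
      omega
    have hCeq := hcdeq C hCCD
    have hCC2 : Nat.card (Subgroup.centralizer (C : Set G)) = 2 := by
      have hCpos : 0 < Nat.card C := Nat.card_pos
      have h6 : Nat.card C * Nat.card (Subgroup.centralizer (C : Set G)) = Nat.card C * 2 := by
        rw [hCeq, ← hTeq]; ring
      exact Nat.eq_of_mul_eq_mul_left hCpos h6
    have hTle : T ≤ Subgroup.centralizer (C : Set G) := by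
      rw [hT, Subgroup.zpowers_le]
      exact mem_centralizer_centralizer_self T (Subgroup.mem_zpowers t)
    have hTCCeq : T = Subgroup.centralizer (C : Set G) :=
      Subgroup.eq_of_le_of_card_ge hTle (by rw [hCC2, hcardT])
    have hCindex : C.index = 2 := by
      have h7 := Subgroup.card_mul_index C
      have hCpos : 0 < Nat.card C := Nat.card_pos
      have h8 : Nat.card C * C.index = Nat.card C * 2 := by
        rw [h7, ← hTeq]; ring
      exact Nat.eq_of_mul_eq_mul_left hCpos h8
    have hCnormal : C.Normal := normal_of_index_two C hCindex
    have hTnormal : T.Normal := by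
      rw [hTCCeq]
      exact centralizer_normal_of_normal C hCnormal
    have htZ : t ∈ Subgroup.center G := by
      rw [Subgroup.mem_center_iff]
      intro g
      have hconj := hTnormal.conj_mem t (Subgroup.mem_zpowers t) g
      rcases mem_zpowers_order_two ht2 hconj with h1 | h1
      · exfalso
        have ht1 : t = 1 := by
          have := congrArg (fun z => g⁻¹ * z * g) h1
          simpa [mul_assoc] using this
        rw [ht1, orderOf_one] at ht2
        omega
      · have := congrArg (fun z => z * g) h1
        simpa [mul_assoc] using this
    rw [hZ, Subgroup.mem_bot] at htZ
    rw [htZ, orderOf_one] at ht2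
    omega
  · -- |P| = 2
    have hkeq : k = 1 := by omega
    have hPcard2 : ∀ Q : Sylow 2 G, Nat.card (Q : Subgroup G) = 2 := by
      intro Q; rw [hcardP Q, hkeq, pow_one]
    have h2dvdG : 2 ∣ Nat.card G := by
      have := Subgroup.card_subgroup_dvd_card (P : Subgroup G)
      rwa [hPcard2 P] at this
    obtain ⟨m, hm⟩ := h2dvdG
    have hmodd : ¬ 2 ∣ m := by
      intro hdvd
      obtain ⟨r, hr⟩ := hdvd
      have h4dvd : 2 ^ 2 ∣ Nat.card G := ⟨r, by rw [hm, hr]; ring⟩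
      have := (Nat.Prime.pow_dvd_iff_le_factorization Nat.prime_two
        (Nat.card_pos.ne')).mp h4dvd
      omega
    have hself : ∀ u : G, orderOf u = 2 →
        Nat.card (Subgroup.centralizer ((Subgroup.zpowers u : Subgroup G) : Set G)) = 2 := by
      intro u hu
      set Cu := Subgroup.centralizer ((Subgroup.zpowers u : Subgroup G) : Set G) with hCu
      have huCu : u ∈ Cu := mem_centralizer_zpowers_self u
      have h2Cu : 2 ∣ Nat.card Cu := hu ▸ Subgroup.orderOf_dvd_natCard Cu huCu
      by_cases hQex : ∃ Q : Sylow 2 G, Cu = (Q : Subgroup G)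
      · obtain ⟨Q, hQ⟩ := hQex
        rw [hQ, hPcard2 Q]
      · push_neg at hQex
        exfalso
        have heq := hcdeq Cu (hextra Cu hQex)
        have huCC : u ∈ Subgroup.centralizer (Cu : Set G) :=
          mem_centralizer_centralizer_self (Subgroup.zpowers u) (Subgroup.mem_zpowers u)
        have h2CC : 2 ∣ Nat.card (Subgroup.centralizer (Cu : Set G)) :=
          hu ▸ Subgroup.orderOf_dvd_natCard _ huCC
        obtain ⟨a, ha⟩ := h2Cu
        obtain ⟨b, hb⟩ := h2CC
        rw [ha, hb, hm] at heq
        have h4 : 2 * m = 2 * (2 * (a * b)) := by rw [← heq]; ring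
        have := Nat.eq_of_mul_eq_mul_left (by omega : 0 < 2) h4
        exact hmodd ⟨a * b, this⟩
    have hm1 : m ≠ 1 := by
      intro h1
      have hPt : Nat.card (P : Subgroup G) = Nat.card G := by
        rw [hPcard2 P, hm, h1]
      exact hnn P (by rw [Subgroup.eq_top_of_card_eq _ hPt]; infer_instance)
    set q := m.minFac with hq
    have hqprime : q.Prime := Nat.minFac_prime hm1
    have hqodd : q ≠ 2 := by
      intro h2
      exact hmodd (h2 ▸ m.minFac_dvd)
    haveI : Fact q.Prime := ⟨hqprime⟩
    obtain ⟨R⟩ : Nonempty (Sylow q G) := inferInstance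
    have hqdvdG : q ∣ Nat.card G := dvd_trans m.minFac_dvd ⟨2, by rw [hm]; ring⟩
    have hfq : 1 ≤ (Nat.card G).factorization q :=
      Nat.Prime.factorization_pos_of_dvd hqprime (Nat.card_pos.ne') hqdvdG
    have hcardR : Nat.card (R : Subgroup G) = q ^ ((Nat.card G).factorization q) :=
      Sylow.card_eq_multiplicity R
    have hRodd : ¬ 2 ∣ Nat.card (R : Subgroup G) := by
      rw [hcardR]
      intro hdvd
      have h2q := Nat.prime_two.dvd_of_dvd_pow hdvd
      exact hqodd ((Nat.prime_dvd_prime_iff_eq Nat.prime_two hqprime).mp h2q).symm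
    have hR3 : 3 ≤ Nat.card (R : Subgroup G) := by
      rw [hcardR]
      have hle : q ≤ q ^ ((Nat.card G).factorization q) :=
        Nat.le_self_pow (by omega) q
      have hq3 : 3 ≤ q := by
        have := hqprime.two_le
        omega
      omega
    have hRCD : ∀ K : Subgroup G, cdMeasure K ≤ cdMeasure (R : Subgroup G) := by
      apply hextra
      intro Q hQ
      have := hR3
      rw [hQ, hPcard2 Q] at this
      omega
    have hReq := hcdeq (R : Subgroup G) hRCD
    have h2CR : 2 ∣ Nat.card (Subgroup.centralizer ((R : Subgroup G) : Set G)) := by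
      have h2G : 2 ∣ Nat.card G := ⟨m, hm⟩
      rw [← hReq] at h2G
      rcases (Nat.Prime.dvd_mul Nat.prime_two).mp h2G with hcase | hcase
      · exact absurd hcase hRodd
      · exact hcase
    obtain ⟨u, hu2, huCR⟩ := exists_orderTwo_of_two_dvd _ h2CR
    have hRle : (R : Subgroup G) ≤
        Subgroup.centralizer ((Subgroup.zpowers u : Subgroup G) : Set G) := by
      intro x hx
      rw [Subgroup.mem_centralizer_iff]
      rintro w ⟨n, rfl⟩
      have hcomm : Commute u x := (Subgroup.mem_centralizer_iff.mp huCR x hx).symm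
      exact (hcomm.zpow_left n).eq
    have hle2 := Subgroup.card_le_of_le hRle
    rw [hself u hu2] at hle2
    omega
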